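/- Let y(σ) ∈ ℝᴺ₊ denote, for each σ > 0, a Nash equilibrium for the parameters (θ, m, σ). Then for every i = 1,…,N: y_i(σ) → θ_i^(1/p) as σ → ∞, and y_i(σ) → θ̄^(1/p) as σ → 0⁺, where θ̄ = (1/M) Σ_{k=1}^N m_k θ_k. -/

import Mathlib

open Filter Topology Finset Real

private lemma aux_rearrange {N : ℕ} (m θ : Fin N → ℝ) {p s : ℝ} (y : Fin N → ℝ)
    (heq : ∀ i, ∑ k, m k * (y k - y i) + s * (θ i - y i ^ p) * y i = 0) (i : Fin N) :
    s * (θ i - y i ^ p) * y i = (∑ k, m k) * y i - ∑ k, m k * y k := by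
  have h := heq i
  have hexp : ∑ k, m k * (y k - y i) = (∑ k, m k * y k) - (∑ k, m k) * y i := by
    simp [mul_sub, Finset.sum_sub_distrib, Finset.sum_mul]
  linarith

private lemma aux_pow_bounds {N : ℕ} (m θ : Fin N → ℝ) (hm : ∀ i, 0 < m i)
    {p s : ℝ} (hp : 0 < p) (hs : 0 < s) (y : Fin N → ℝ)
    (hpos : ∀ i, 0 < y i)
    (heq : ∀ i, ∑ k, m k * (y k - y i) + s * (θ i - y i ^ p) * y i = 0)
    {tmin tmax : ℝ} (h1 : ∀ i, tmin ≤ θ i) (h2 : ∀ i, θ i ≤ tmax) :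
    ∀ j, tmin ≤ y j ^ p ∧ y j ^ p ≤ tmax := by
  intro j
  constructor
  · obtain ⟨l, -, hl⟩ := Finset.exists_min_image Finset.univ y ⟨j, Finset.mem_univ j⟩
    have hsum : 0 ≤ ∑ k, m k * (y k - y l) :=
      Finset.sum_nonneg fun k _ =>
        mul_nonneg (hm k).le (sub_nonneg.2 (hl k (Finset.mem_univ k)))
    have h0 := heq l
    have hyl : θ l ≤ y l ^ p := by
      by_contra hcon
      push_neg at hcon
      have : 0 < s * (θ l - y l ^ p) * y l :=
        mul_pos (mul_pos hs (sub_pos.2 hcon)) (hpos l)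
      linarith
    calc tmin ≤ θ l := h1 l
      _ ≤ y l ^ p := hyl
      _ ≤ y j ^ p := Real.rpow_le_rpow (hpos l).le (hl j (Finset.mem_univ j)) hp.le
  · obtain ⟨l, -, hl⟩ := Finset.exists_max_image Finset.univ y ⟨j, Finset.mem_univ j⟩
    have hsum : ∑ k, m k * (y k - y l) ≤ 0 :=
      Finset.sum_nonpos fun k _ =>
        mul_nonpos_of_nonneg_of_nonpos (hm k).le (sub_nonpos.2 (hl k (Finset.mem_univ k)))
    have h0 := heq l
    have hyl : y l ^ p ≤ θ l := by
      by_contra hcon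
      push_neg at hcon
      have : s * (θ l - y l ^ p) * y l < 0 :=
        mul_neg_of_neg_of_pos (mul_neg_of_pos_of_neg hs (sub_neg.2 hcon)) (hpos l)
      linarith
    calc y j ^ p ≤ y l ^ p := Real.rpow_le_rpow (hpos j).le (hl j (Finset.mem_univ j)) hp.le
      _ ≤ θ l := hyl
      _ ≤ tmax := h2 l

private lemma aux_identity {N : ℕ} (m θ : Fin N → ℝ) {p s : ℝ} (hs : 0 < s) (y : Fin N → ℝ)
    (heq : ∀ i, ∑ k, m k * (y k - y i) + s * (θ i - y i ^ p) * y i = 0) :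
    ∑ k, m k * θ k * y k = ∑ k, m k * (y k ^ p) * y k := by
  have h1 : ∀ j, m j * (s * (θ j - y j ^ p) * y j)
      = m j * ((∑ k, m k) * y j - ∑ k, m k * y k) := fun j => by
    rw [aux_rearrange m θ y heq j]
  have h2 : ∑ j, m j * (s * (θ j - y j ^ p) * y j) = 0 := by
    rw [Finset.sum_congr rfl fun j _ => h1 j]
    simp only [mul_sub, Finset.sum_sub_distrib, ← Finset.sum_mul, Finset.mul_sum]
    rw [Finset.sum_comm]
    ring_nf
    simp [Finset.mul_sum, mul_comm, mul_left_comm]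
  have h3 : s * ∑ j, (m j * θ j * y j - m j * (y j ^ p) * y j) = 0 := by
    rw [← h2, Finset.mul_sum]
    exact Finset.sum_congr rfl fun j _ => by ring
  have h4 : ∑ j, (m j * θ j * y j - m j * (y j ^ p) * y j) = 0 :=
    (mul_eq_zero.1 h3).resolve_left hs.ne'
  rw [Finset.sum_sub_distrib] at h4
  linarith

private lemma aux_rpow_inv {x p : ℝ} (hx : 0 < x) (hp : 0 < p) : (x ^ p) ^ (1/p) = x := by
  rw [← Real.rpow_mul hx.le, mul_one_div_cancel hp.ne', Real.rpow_one]


set_option maxHeartbeats 1000000 in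
/-- Asymptotics of the Nash equilibrium in the friction strength: if `y(σ)` is a Nash
equilibrium for the parameters `(θ, m, σ)` for each `σ > 0`, then `y_i(σ) → θ_i^(1/p)` as
`σ → ∞` and `y_i(σ) → θ̄^(1/p)` as `σ → 0⁺`, where `θ̄ = (1/M) Σ_k m_k θ_k`. -/
theorem nash_equilibrium_friction_asymptotics
    {N : ℕ} (hN : 0 < N)
    (m θ : Fin N → ℝ) (hm : ∀ i, 0 < m i) (hθ : ∀ i, 0 < θ i)
    {p : ℝ} (hp : 0 < p)
    (y : ℝ → Fin N → ℝ)
    (hy : ∀ s : ℝ, 0 < s → (∀ i, 0 < y s i) ∧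
      (∀ i, ∑ k, m k * (y s k - y s i) + s * (θ i - y s i ^ p) * y s i = 0)) :
    ∀ i, Tendsto (fun s => y s i) atTop (𝓝 (θ i ^ (1 / p))) ∧
      Tendsto (fun s => y s i) (𝓝[>] 0)
        (𝓝 (((∑ k, m k * θ k) / (∑ k, m k)) ^ (1 / p))) := by
  intro i
  have hNe : Nonempty (Fin N) := ⟨⟨0, hN⟩⟩
  have hUne : (Finset.univ : Finset (Fin N)).Nonempty := Finset.univ_nonempty
  set M := ∑ k, m k with hMdef
  set T := ∑ k, m k * θ k with hTdef
  have hMpos : 0 < M := Finset.sum_pos (fun k _ => hm k) hUne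
  have hTpos : 0 < T := Finset.sum_pos (fun k _ => mul_pos (hm k) (hθ k)) hUne
  set D := T / M with hDdef
  have hDpos : 0 < D := div_pos hTpos hMpos
  set tmax := Finset.univ.sup' hUne θ with htmaxdef
  set tmin := Finset.univ.inf' hUne θ with htmindef
  have htm1 : ∀ j, tmin ≤ θ j := fun j => Finset.inf'_le θ (Finset.mem_univ j)
  have htm2 : ∀ j, θ j ≤ tmax := fun j => Finset.le_sup' θ (Finset.mem_univ j)
  have htminpos : 0 < tmin := (Finset.lt_inf'_iff hUne).2 fun j _ => hθ j
  have htmaxpos : 0 < tmax := lt_of_lt_of_le htminpos (le_trans (htm1 i) (htm2 i))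
  set a := tmin ^ (1/p) with hadef
  set b := tmax ^ (1/p) with hbdef
  have ha : 0 < a := Real.rpow_pos_of_pos htminpos _
  have hb : 0 < b := Real.rpow_pos_of_pos htmaxpos _
  have hab : a ≤ b :=
    Real.rpow_le_rpow htminpos.le (le_trans (htm1 i) (htm2 i)) (by positivity)
  have hpow : ∀ s, 0 < s → ∀ j, tmin ≤ y s j ^ p ∧ y s j ^ p ≤ tmax := fun s hs =>
    aux_pow_bounds m θ hm hp hs (y s) (hy s hs).1 (hy s hs).2 htm1 htm2
  have hyab : ∀ s, 0 < s → ∀ j, a ≤ y s j ∧ y s j ≤ b := by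
    intro s hs j
    have h := hpow s hs j
    have hid := aux_rpow_inv ((hy s hs).1 j) hp
    constructor
    · calc a ≤ (y s j ^ p) ^ (1/p) :=
            Real.rpow_le_rpow htminpos.le h.1 (by positivity)
        _ = y s j := hid
    · calc y s j = (y s j ^ p) ^ (1/p) := hid.symm
        _ ≤ b := Real.rpow_le_rpow (Real.rpow_nonneg ((hy s hs).1 j).le p) h.2 (by positivity)
  have hrear : ∀ s, 0 < s → ∀ j,
      s * (θ j - y s j ^ p) * y s j = M * y s j - ∑ k, m k * y s k := fun s hs =>
    aux_rearrange m θ (y s) (hy s hs).2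
  have hSy : ∀ s, 0 < s → M * a ≤ (∑ k, m k * y s k) ∧ (∑ k, m k * y s k) ≤ M * b := by
    intro s hs
    constructor
    · rw [hMdef, Finset.sum_mul]
      exact Finset.sum_le_sum fun k _ =>
        mul_le_mul_of_nonneg_left (hyab s hs k).1 (hm k).le
    · rw [hMdef, Finset.sum_mul]
      exact Finset.sum_le_sum fun k _ =>
        mul_le_mul_of_nonneg_left (hyab s hs k).2 (hm k).le
  -- Part 1 : s → ∞
  have part1 : Tendsto (fun s => y s i) atTop (𝓝 (θ i ^ (1 / p))) := by
    set Q := M * (b - a) / a with hQdef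
    have hQnonneg : 0 ≤ Q :=
      div_nonneg (mul_nonneg hMpos.le (sub_nonneg.2 hab)) ha.le
    have claim1 : ∀ s, 0 < s →
        θ i - Q / s ≤ y s i ^ p ∧ y s i ^ p ≤ θ i + Q / s := by
      intro s hs
      have hposi := (hy s hs).1 i
      have hr := hrear s hs i
      have hSy1 := (hSy s hs).1
      have hSy2 := (hSy s hs).2
      have hyi := hyab s hs i
      have hq : Q * a = M * (b - a) := by
        rw [hQdef]; field_simp
      have hrsy : (Q / s) * (s * y s i) = Q * y s i := by
        field_simp
      have hQay : Q * a ≤ Q * y s i := mul_le_mul_of_nonneg_left hyi.1 hQnonneg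
      have hMy1 : M * a ≤ M * y s i := mul_le_mul_of_nonneg_left hyi.1 hMpos.le
      have hMy2 : M * y s i ≤ M * b := mul_le_mul_of_nonneg_left hyi.2 hMpos.le
      have hsy : 0 < s * y s i := mul_pos hs hposi
      constructor
      · have key : (θ i - y s i ^ p - Q / s) * (s * y s i) ≤ 0 := by
          nlinarith [hr, hSy1, hMy2, hq, hrsy, hQay]
        nlinarith [key, hsy]
      · have key : (y s i ^ p - θ i - Q / s) * (s * y s i) ≤ 0 := by
          nlinarith [hr, hSy2, hMy1, hq, hrsy, hQay]
        nlinarith [key, hsy]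
    have hQs0 : Tendsto (fun s : ℝ => Q / s) atTop (𝓝 0) :=
      tendsto_const_nhds.div_atTop tendsto_id
    have hlow : Tendsto (fun s : ℝ => θ i - Q / s) atTop (𝓝 (θ i)) := by
      simpa using tendsto_const_nhds.sub hQs0
    have hhigh : Tendsto (fun s : ℝ => θ i + Q / s) atTop (𝓝 (θ i)) := by
      simpa using tendsto_const_nhds.add hQs0
    have hyppow : Tendsto (fun s => y s i ^ p) atTop (𝓝 (θ i)) := by
      refine tendsto_of_tendsto_of_tendsto_of_le_of_le' hlow hhigh ?_ ?_
      · filter_upwards [eventually_gt_atTop (0:ℝ)] with s hs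
        exact (claim1 s hs).1
      · filter_upwards [eventually_gt_atTop (0:ℝ)] with s hs
        exact (claim1 s hs).2
    have h2 := hyppow.rpow_const (p := 1/p) (Or.inl (hθ i).ne')
    refine Tendsto.congr' ?_ h2
    filter_upwards [eventually_gt_atTop (0:ℝ)] with s hs
    exact aux_rpow_inv ((hy s hs).1 i) hp
  refine ⟨part1, ?_⟩
  -- Part 2 : s → 0⁺
  set U : ℝ → ℝ := fun s => Finset.univ.inf' hUne (y s) with hUdef
  set V : ℝ → ℝ := fun s => Finset.univ.sup' hUne (y s) with hVdef
  have hUV : ∀ s, 0 < s → a ≤ U s ∧ V s ≤ b ∧ U s ≤ y s i ∧ y s i ≤ V s := by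
    intro s hs
    exact ⟨Finset.le_inf' hUne _ fun j _ => (hyab s hs j).1,
      Finset.sup'_le hUne _ fun j _ => (hyab s hs j).2,
      Finset.inf'_le _ (Finset.mem_univ i), Finset.le_sup' _ (Finset.mem_univ i)⟩
  set K := 2 * tmax * b / (M * a) with hKdef
  have hKpos : 0 < K := by positivity
  have hMK : M * (K * a) = 2 * tmax * b := by
    rw [hKdef]; field_simp
  have hterm : ∀ s, 0 < s → ∀ j,
      s * (θ j - y s j ^ p) * y s j ≤ s * (tmax * b) ∧
      -(s * (tmax * b)) ≤ s * (θ j - y s j ^ p) * y s j := by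
    intro s hs j
    have h1 := hpow s hs j
    have h2 := hyab s hs j
    have hposj := (hy s hs).1 j
    have hX1 : θ j - y s j ^ p ≤ tmax := by
      have h3 := htm2 j
      have h4 := Real.rpow_nonneg hposj.le p
      linarith
    have hX2 : -tmax ≤ θ j - y s j ^ p := by
      have h3 := hθ j; linarith [h1.2]
    constructor
    · nlinarith [mul_nonneg hs.le (mul_nonneg (sub_nonneg.2 hX1) hposj.le),
        mul_nonneg hs.le (mul_nonneg htmaxpos.le (sub_nonneg.2 h2.2))]
    · nlinarith [mul_nonneg hs.le (mul_nonneg (sub_nonneg.2 hX2) hposj.le),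
        mul_nonneg hs.le (mul_nonneg htmaxpos.le (sub_nonneg.2 h2.2))]
  have hgap : ∀ s, 0 < s → V s - U s ≤ K * a * s := by
    intro s hs
    obtain ⟨jv, -, hjv⟩ := Finset.exists_mem_eq_sup' hUne (y s)
    obtain ⟨ju, -, hju⟩ := Finset.exists_mem_eq_inf' hUne (y s)
    have h1 := hrear s hs jv
    have h2 := hrear s hs ju
    have hb1 := (hterm s hs jv).1
    have hb2 := (hterm s hs ju).2
    have hMKs : M * (K * a) * s = 2 * tmax * b * s := by rw [hMK]
    have h5 : M * (V s - U s) ≤ M * (K * a * s) := by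
      have hVeq : V s = y s jv := hjv
      have hUeq : U s = y s ju := hju
      rw [hVeq, hUeq]
      nlinarith [h1, h2, hb1, hb2, hMKs]
    have := le_of_mul_le_mul_left h5 hMpos
    linarith
  have hDineq : ∀ s, 0 < s → D * U s ≤ V s ^ p * V s ∧ U s ^ p * U s ≤ D * V s := by
    intro s hs
    have hid := aux_identity m θ hs (y s) (hy s hs).2
    have hUV' := hUV s hs
    have hTD : T = D * M := by rw [hDdef]; field_simp
    have hUpos : 0 < U s := lt_of_lt_of_le ha hUV'.1
    have hUleV : U s ≤ V s := le_trans hUV'.2.2.1 hUV'.2.2.2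
    have hVpos : 0 < V s := lt_of_lt_of_le hUpos hUleV
    constructor
    · have hl : T * U s ≤ ∑ k, m k * θ k * y s k := by
        rw [hTdef, Finset.sum_mul]
        exact Finset.sum_le_sum fun k _ =>
          mul_le_mul_of_nonneg_left (Finset.inf'_le _ (Finset.mem_univ k))
            (mul_pos (hm k) (hθ k)).le
      have hr : (∑ k, m k * (y s k ^ p) * y s k) ≤ M * (V s ^ p * V s) := by
        rw [hMdef, Finset.sum_mul]
        refine Finset.sum_le_sum fun k _ => ?_
        have hyk := (hy s hs).1 k
        have hkV : y s k ≤ V s := Finset.le_sup' _ (Finset.mem_univ k)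
        have hkVp : y s k ^ p ≤ V s ^ p := Real.rpow_le_rpow hyk.le hkV hp.le
        have hstep : y s k ^ p * y s k ≤ V s ^ p * V s :=
          mul_le_mul hkVp hkV hyk.le (Real.rpow_nonneg hVpos.le p)
        calc m k * y s k ^ p * y s k = m k * (y s k ^ p * y s k) := by ring
          _ ≤ m k * (V s ^ p * V s) := mul_le_mul_of_nonneg_left hstep (hm k).le
      have hmain : D * M * U s ≤ M * (V s ^ p * V s) := by
        rw [← hTD]; rw [hid] at hl; linarith
      have h6 : M * (D * U s) ≤ M * (V s ^ p * V s) := by ring_nf at hmain ⊢; linarith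
      exact le_of_mul_le_mul_left h6 hMpos
    · have hl : M * (U s ^ p * U s) ≤ ∑ k, m k * (y s k ^ p) * y s k := by
        rw [hMdef, Finset.sum_mul]
        refine Finset.sum_le_sum fun k _ => ?_
        have hyk := (hy s hs).1 k
        have hkU : U s ≤ y s k := Finset.inf'_le _ (Finset.mem_univ k)
        have hkUp : U s ^ p ≤ y s k ^ p := Real.rpow_le_rpow hUpos.le hkU hp.le
        have hstep : U s ^ p * U s ≤ y s k ^ p * y s k :=
          mul_le_mul hkUp hkU hUpos.le (Real.rpow_nonneg hyk.le p)
        calc m k * (U s ^ p * U s) ≤ m k * (y s k ^ p * y s k) :=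
              mul_le_mul_of_nonneg_left hstep (hm k).le
          _ = m k * y s k ^ p * y s k := by ring
      have hr : (∑ k, m k * θ k * y s k) ≤ T * V s := by
        rw [hTdef, Finset.sum_mul]
        exact Finset.sum_le_sum fun k _ =>
          mul_le_mul_of_nonneg_left (Finset.le_sup' _ (Finset.mem_univ k))
            (mul_pos (hm k) (hθ k)).le
      have hmain : M * (U s ^ p * U s) ≤ D * M * V s := by
        rw [← hTD]; rw [← hid] at hl; linarith
      have h6 : M * (U s ^ p * U s) ≤ M * (D * V s) := by ring_nf at hmain ⊢; linarith
      exact le_of_mul_le_mul_left h6 hMpos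
  have hVlow : ∀ s, 0 < s → D - D * K * s ≤ V s ^ p := by
    intro s hs
    have hUV' := hUV s hs
    have hUpos : 0 < U s := lt_of_lt_of_le ha hUV'.1
    have hUleV : U s ≤ V s := le_trans hUV'.2.2.1 hUV'.2.2.2
    have hVpos : 0 < V s := lt_of_lt_of_le hUpos hUleV
    have haV : a ≤ V s := le_trans hUV'.1 hUleV
    have hD1 := (hDineq s hs).1
    have hgap' := hgap s hs
    have key : (D - D * K * s - V s ^ p) * V s ≤ 0 := by
      nlinarith [hD1, mul_le_mul_of_nonneg_left hgap' hDpos.le,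
        mul_nonneg (mul_nonneg (mul_nonneg hDpos.le hKpos.le) hs.le) (sub_nonneg.2 haV)]
    nlinarith [key, hVpos]
  have hUhigh : ∀ s, 0 < s → U s ^ p ≤ D + D * K * s := by
    intro s hs
    have hUV' := hUV s hs
    have hUpos : 0 < U s := lt_of_lt_of_le ha hUV'.1
    have hD2 := (hDineq s hs).2
    have hgap' := hgap s hs
    have key : (U s ^ p - D - D * K * s) * U s ≤ 0 := by
      nlinarith [hD2, mul_le_mul_of_nonneg_left hgap' hDpos.le,
        mul_nonneg (mul_nonneg (mul_nonneg hDpos.le hKpos.le) hs.le) (sub_nonneg.2 hUV'.1)]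
    nlinarith [key, hUpos]
  have hfac : ∀ s, 0 < s → 1 ≤ (1 + K * s) ^ p := by
    intro s hs
    calc (1:ℝ) = 1 ^ p := (Real.one_rpow p).symm
      _ ≤ (1 + K * s) ^ p :=
        Real.rpow_le_rpow zero_le_one (by nlinarith [mul_pos hKpos hs]) hp.le
  have hVUp : ∀ s, 0 < s → V s ^ p - U s ^ p ≤ b ^ p * ((1 + K * s) ^ p - 1) := by
    intro s hs
    have hUV' := hUV s hs
    have hUpos : 0 < U s := lt_of_lt_of_le ha hUV'.1
    have hUleV : U s ≤ V s := le_trans hUV'.2.2.1 hUV'.2.2.2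
    have hVpos : 0 < V s := lt_of_lt_of_le hUpos hUleV
    have hgap' := hgap s hs
    have hVle : V s ≤ U s * (1 + K * s) := by
      nlinarith [mul_le_mul_of_nonneg_right hUV'.1 (mul_pos hKpos hs).le]
    have hVp : V s ^ p ≤ U s ^ p * (1 + K * s) ^ p := by
      calc V s ^ p ≤ (U s * (1 + K * s)) ^ p :=
            Real.rpow_le_rpow hVpos.le hVle hp.le
        _ = U s ^ p * (1 + K * s) ^ p :=
            Real.mul_rpow hUpos.le (by nlinarith [mul_pos hKpos hs])
    have hUb : U s ≤ b := le_trans hUleV hUV'.2.1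
    have hUbp : U s ^ p ≤ b ^ p := Real.rpow_le_rpow hUpos.le hUb hp.le
    have hf := hfac s hs
    nlinarith [mul_le_mul_of_nonneg_right hUbp (sub_nonneg.2 hf), hVp]
  have hsqueeze : ∀ s, 0 < s →
      D - D * K * s - b ^ p * ((1 + K * s) ^ p - 1) ≤ y s i ^ p ∧
      y s i ^ p ≤ D + D * K * s + b ^ p * ((1 + K * s) ^ p - 1) := by
    intro s hs
    have hUV' := hUV s hs
    have hUpos : 0 < U s := lt_of_lt_of_le ha hUV'.1
    have hi1 : U s ^ p ≤ y s i ^ p := Real.rpow_le_rpow hUpos.le hUV'.2.2.1 hp.le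
    have hi2 : y s i ^ p ≤ V s ^ p :=
      Real.rpow_le_rpow ((hy s hs).1 i).le hUV'.2.2.2 hp.le
    have h1 := hVUp s hs
    have h2 := hVlow s hs
    have h3 := hUhigh s hs
    exact ⟨by linarith, by linarith⟩
  have hs0 : Tendsto (fun s : ℝ => s) (𝓝[>] (0:ℝ)) (𝓝 0) :=
    (tendsto_id.mono_left nhdsWithin_le_nhds)
  have hbase : Tendsto (fun s : ℝ => 1 + K * s) (𝓝[>] (0:ℝ)) (𝓝 1) := by
    have := hs0.const_mul K
    simpa using tendsto_const_nhds.add this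
  have hrp : Tendsto (fun s : ℝ => (1 + K * s) ^ p) (𝓝[>] (0:ℝ)) (𝓝 1) := by
    simpa using hbase.rpow_const (p := p) (Or.inl one_ne_zero)
  have hE0 : Tendsto (fun s : ℝ => b ^ p * ((1 + K * s) ^ p - 1)) (𝓝[>] (0:ℝ)) (𝓝 0) := by
    simpa using tendsto_const_nhds.mul (hrp.sub (tendsto_const_nhds (x := (1:ℝ))))
  have hks : Tendsto (fun s : ℝ => D * K * s) (𝓝[>] (0:ℝ)) (𝓝 0) := by
    simpa using hs0.const_mul (D * K)
  have hlow2 : Tendsto (fun s : ℝ => D - D * K * s - b ^ p * ((1 + K * s) ^ p - 1))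
      (𝓝[>] (0:ℝ)) (𝓝 D) := by
    simpa using (tendsto_const_nhds.sub hks).sub hE0
  have hhigh2 : Tendsto (fun s : ℝ => D + D * K * s + b ^ p * ((1 + K * s) ^ p - 1))
      (𝓝[>] (0:ℝ)) (𝓝 D) := by
    simpa using (tendsto_const_nhds.add hks).add hE0
  have hyp2 : Tendsto (fun s => y s i ^ p) (𝓝[>] (0:ℝ)) (𝓝 D) := by
    refine tendsto_of_tendsto_of_tendsto_of_le_of_le' hlow2 hhigh2 ?_ ?_
    · exact eventually_of_mem self_mem_nhdsWithin fun s hs => (hsqueeze s hs).1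
    · exact eventually_of_mem self_mem_nhdsWithin fun s hs => (hsqueeze s hs).2
  have h2 := hyp2.rpow_const (p := 1/p) (Or.inl hDpos.ne')
  refine Tendsto.congr' ?_ h2
  exact eventually_of_mem self_mem_nhdsWithin fun s hs => aux_rpow_inv ((hy s hs).1 i) hp
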